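/- Let λ be a σ-finite measure on X which is R-invariant, i.e. ∫ R f dλ = ∫ f dλ for every nonnegative measurable f : X → ℝ. Let φ : X → ℝ be a nonnegative measurable function and μ = λ.withDensity φ. Then μ is R-invariant (∫ R f dμ = ∫ f dμ for every nonnegative measurable f) if and only if φ ∘ σ = φ λ-almost everywhere. -/
import Mathlib


open MeasureTheory

/-- If `λ` is `R`-invariant then `μ = λ.withDensity φ` is `R`-invariant iff
`φ ∘ σ = φ` `λ`-a.e. -/
theorem stmt_5 {X : Type*} [MeasurableSpace X] (σ : X → X)
    (hσ : Measurable σ) (hσsurj : Function.Surjective σ)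
    (R : (X → ℝ) → (X → ℝ))
    (hadd : ∀ f g : X → ℝ, R (f + g) = R f + R g)
    (hsmul : ∀ (c : ℝ) (f : X → ℝ), R (c • f) = c • R f)
    (hmeas : ∀ f : X → ℝ, Measurable f → Measurable (R f))
    (hpos : ∀ f : X → ℝ, 0 ≤ f → 0 ≤ R f)
    (hpull : ∀ f g : X → ℝ, Measurable f → Measurable g →
      R ((f ∘ σ) * g) = f * R g)
    (lam : Measure X) [SigmaFinite lam]
    (hRinv : ∀ f : X → ℝ, Measurable f → 0 ≤ f →
      ∫⁻ x, ENNReal.ofReal (R f x) ∂lam = ∫⁻ x, ENNReal.ofReal (f x) ∂lam)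
    (φ : X → ℝ) (hφ : Measurable φ) (hφ0 : 0 ≤ φ)
    (μ : Measure X)
    (hμ : μ = lam.withDensity fun x => ENNReal.ofReal (φ x)) :
    (∀ f : X → ℝ, Measurable f → 0 ≤ f →
      ∫⁻ x, ENNReal.ofReal (R f x) ∂μ = ∫⁻ x, ENNReal.ofReal (f x) ∂μ) ↔
    (fun x => φ (σ x)) =ᵐ[lam] φ := by
  -- integration against μ is integration of φ·g against λ
  have hwd : ∀ g : X → ℝ, Measurable g →
      ∫⁻ x, ENNReal.ofReal (g x) ∂μ = ∫⁻ x, ENNReal.ofReal (φ x * g x) ∂lam := by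
    intro g hg
    rw [hμ, lintegral_withDensity_eq_lintegral_mul lam hφ.ennreal_ofReal
      hg.ennreal_ofReal]
    exact lintegral_congr fun x => by simp [ENNReal.ofReal_mul (hφ0 x)]
  -- key identity from pull-out property and λ-invariance
  have key : ∀ f : X → ℝ, Measurable f → 0 ≤ f →
      ∫⁻ x, ENNReal.ofReal (φ x * R f x) ∂lam
        = ∫⁻ x, ENNReal.ofReal (φ (σ x) * f x) ∂lam := by
    intro f hf hf0
    have h1 := hRinv ((φ ∘ σ) * f) ((hφ.comp hσ).mul hf)
      (fun x => mul_nonneg (hφ0 _) (hf0 x))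
    rw [hpull φ f hφ hf] at h1
    simpa using h1
  constructor
  · intro hinv
    have hset : ∀ s : Set X, MeasurableSet s →
        ∫⁻ x in s, ENNReal.ofReal (φ (σ x)) ∂lam
          = ∫⁻ x in s, ENNReal.ofReal (φ x) ∂lam := by
      intro s hs
      set f : X → ℝ := s.indicator 1 with hfdef
      have hfm : Measurable f := measurable_one.indicator hs
      have hf0 : 0 ≤ f := fun x => Set.indicator_nonneg (fun _ _ => zero_le_one) x
      have h2 := hinv f hfm hf0
      rw [hwd (R f) (hmeas f hfm), hwd f hfm, key f hfm hf0] at h2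
      have hind : ∀ ψ : X → ℝ,
          ∫⁻ x, ENNReal.ofReal (ψ x * f x) ∂lam
            = ∫⁻ x in s, ENNReal.ofReal (ψ x) ∂lam := by
        intro ψ
        rw [← lintegral_indicator hs]
        refine lintegral_congr fun x => ?_
        by_cases hx : x ∈ s <;> simp [hfdef, hx]
      rw [hind (fun x => φ (σ x)), hind φ] at h2
      exact h2
    have hae' : (fun x => ENNReal.ofReal (φ (σ x))) =ᵐ[lam]
        (fun x => ENNReal.ofReal (φ x)) :=
      ae_eq_of_forall_setLIntegral_eq_of_sigmaFinite
        ((hφ.comp hσ).ennreal_ofReal) hφ.ennreal_ofReal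
        (fun s hs _ => hset s hs)
    filter_upwards [hae'] with x hx
    exact (ENNReal.ofReal_eq_ofReal_iff (hφ0 _) (hφ0 _)).mp hx
  · intro hae f hf hf0
    rw [hwd (R f) (hmeas f hf), hwd f hf, key f hf hf0]
    refine lintegral_congr_ae ?_
    filter_upwards [hae] with x hx
    rw [hx]
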